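/- Let G be an undirected graph and let D ⊆ V(G) be a vertex set with s ∈ D, t ∉ D, such that G[D] (the induced subgraph on D) is connected and D is not adjacent to t. Then the open neighborhood N_G(D) contains exactly one minimal D,t-separator. -/

import Mathlib

open SimpleGraph

variable {V : Type*}

/-- `u` can reach `v` in `G − S`: there is a walk whose support avoids `S`. -/
def ReachAvoid (G : SimpleGraph V) (S : Set V) (u v : V) : Prop :=
  ∃ p : G.Walk u v, ∀ w ∈ p.support, w ∉ S

/-- The union of the connected components of `G − S` that meet `X`. -/
def SetReach (G : SimpleGraph V) (S X : Set V) : Set V :=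
  {v | ∃ x ∈ X, ReachAvoid G S x v}

/-- Open neighborhood of a vertex set: vertices outside `X` adjacent to some vertex of `X`. -/
def Nbhd (G : SimpleGraph V) (X : Set V) : Set V :=
  {v | v ∉ X ∧ ∃ x ∈ X, G.Adj x v}

/-- `S` is an `A,B`-separator of `G`. -/
def IsSep (G : SimpleGraph V) (A B S : Set V) : Prop :=
  Disjoint S A ∧ Disjoint S B ∧ ∀ a ∈ A, ∀ b ∈ B, ¬ ReachAvoid G S a b

/-- `S` is an inclusion-minimal `A,B`-separator of `G`. -/
def IsMinlSep (G : SimpleGraph V) (A B S : Set V) : Prop :=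
  IsSep G A B S ∧ ∀ S' ⊂ S, ¬ IsSep G A B S'

/-- `S` is a minimum-cardinality `A,B`-separator of `G`. -/
def IsMinSep (G : SimpleGraph V) (A B S : Set V) : Prop :=
  IsSep G A B S ∧ ∀ S', IsSep G A B S' → S.ncard ≤ S'.ncard

/-- The minimum cardinality of an `A,B`-separator of `G` (`∞` if none exists). -/
noncomputable def kappa (G : SimpleGraph V) (A B : Set V) : ℕ∞ :=
  sInf {n : ℕ∞ | ∃ S : Set V, IsSep G A B S ∧ (S.ncard : ℕ∞) = n}

/-- If `G[D]` is connected and `D` is not adjacent to `t`, then `N_G(D)` contains exactly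
one minimal `D,t`-separator. -/
theorem unique_minlSep_in_nbhd {V : Type*} (G : SimpleGraph V) (hconn : G.Connected)
    (s t : V) (D : Set V) (hsD : s ∈ D) (htD : t ∉ D)
    (hDconn : ∀ u ∈ D, ∀ v ∈ D, ReachAvoid G Dᶜ u v)
    (hDt : ∀ d ∈ D, ¬ G.Adj d t) :
    ∃! S : Set V, S ⊆ Nbhd G D ∧ IsMinlSep G D {t} S := by
  classical
  have htN : t ∉ Nbhd G D := by
    rintro ⟨-, d, hd, hadj⟩
    exact hDt d hd hadj
  -- The candidate separator
  set S : Set V := {v | v ∈ Nbhd G D ∧ ∃ q : G.Walk v t,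
      ∀ w ∈ q.support, w ≠ v → w ∉ D ∧ w ∉ Nbhd G D} with hS
  have hSsub : S ⊆ Nbhd G D := fun v hv => hv.1
  have hND : ∀ v, v ∈ Nbhd G D → v ∉ D := fun v hv => hv.1
  -- key lemma: any walk from D ∪ N(D) to t contains a vertex of S, whose witness
  -- walk has support inside the original support
  have key : ∀ n (a : V) (p : G.Walk a t), p.length = n → (a ∈ D ∨ a ∈ Nbhd G D) →
      ∃ u ∈ p.support, u ∈ S ∧ ∃ q : G.Walk u t,
        (∀ w ∈ q.support, w ≠ u → w ∉ D ∧ w ∉ Nbhd G D) ∧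
        (∀ w ∈ q.support, w ∈ p.support) := by
    intro n
    induction n using Nat.strong_induction_on with
    | _ n ih =>
      intro a p hlen ha
      by_cases hall : ∀ w ∈ p.support, w ≠ a → w ∉ D ∧ w ∉ Nbhd G D
      · rcases ha with ha | ha
        · -- a ∈ D : impossible, first step leaves D into N(D)
          exfalso
          cases p with
          | nil => exact htD ha
          | @cons _ b _ hadj q =>
            have hb : b ∈ ((SimpleGraph.Walk.cons hadj q).support) := by
              simp [SimpleGraph.Walk.support_cons]
            have hbne : b ≠ a := fun h => G.loopless.irrefl a (h ▸ hadj)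
            have := hall b hb hbne
            exact this.2 ⟨this.1, a, ha, hadj⟩
        · exact ⟨a, p.start_mem_support, ⟨ha, p, hall⟩, p, hall, fun w hw => hw⟩
      · push_neg at hall
        obtain ⟨w, hw, hwa, hwD⟩ := hall
        have hwD' : w ∈ D ∨ w ∈ Nbhd G D := by
          by_cases h1 : w ∈ D
          · exact Or.inl h1
          · exact Or.inr (hwD h1)
        set q := p.dropUntil w hw with hq
        have hspec := p.take_spec hw
        have hlt : q.length < n := by
          have h1 : (p.takeUntil w hw).length + q.length = p.length := by
            rw [← SimpleGraph.Walk.length_append, hspec]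
          have h2 : (p.takeUntil w hw).length ≠ 0 := by
            intro h0
            exact hwa (SimpleGraph.Walk.eq_of_length_eq_zero h0).symm
          omega
        obtain ⟨u, hu, huS, r, hr1, hr2⟩ := ih q.length hlt w q rfl hwD'
        exact ⟨u, p.support_dropUntil_subset hw hu, huS, r, hr1,
          fun x hx => p.support_dropUntil_subset hw (hr2 x hx)⟩
  have hdisjD : ∀ T : Set V, T ⊆ Nbhd G D → Disjoint T D := by
    intro T hT
    rw [Set.disjoint_left]
    intro v hv
    exact hND v (hT hv)
  -- S is a separator
  have hSsep : IsSep G D {t} S := by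
    refine ⟨hdisjD S hSsub, ?_, ?_⟩
    · rw [Set.disjoint_singleton_right]
      exact fun h => htN (hSsub h)
    · rintro a ha b hb ⟨p, hp⟩
      rcases hb with rfl
      obtain ⟨u, hu, huS, -⟩ := key p.length a p rfl (Or.inl ha)
      exact hp u hu huS
  -- any vertex of S not in T ⊆ N(D) gives a D-t walk avoiding T
  have hescape : ∀ (T : Set V), T ⊆ Nbhd G D → ∀ v ∈ S, v ∉ T →
      ∃ a ∈ D, ReachAvoid G T a t := by
    intro T hT v hv hvT
    obtain ⟨⟨hvD, d, hd, hadj⟩, q, hq⟩ := hv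
    refine ⟨d, hd, SimpleGraph.Walk.cons hadj q, ?_⟩
    intro w hw
    rw [SimpleGraph.Walk.support_cons] at hw
    rcases List.mem_cons.mp hw with rfl | hw
    · intro hwT
      exact hND w (hT hwT) hd
    · by_cases hwv : w = v
      · exact hwv ▸ hvT
      · exact fun hwT => (hq w hw hwv).2 (hT hwT)
  -- S is a minimal separator
  have hSmin : IsMinlSep G D {t} S := by
    refine ⟨hSsep, ?_⟩
    rintro S' ⟨hS'sub, hne⟩ hS'sep
    obtain ⟨v, hvS, hvS'⟩ := Set.not_subset.mp hne
    obtain ⟨a, ha, hreach⟩ := hescape S' (hS'sub.trans hSsub) v hvS hvS'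
    exact hS'sep.2.2 a ha t rfl hreach
  refine ⟨S, ⟨hSsub, hSmin⟩, ?_⟩
  rintro T ⟨hTsub, hTsep, hTmin⟩
  -- S ⊆ T
  have hST : S ⊆ T := by
    intro v hv
    by_contra hvT
    obtain ⟨a, ha, hreach⟩ := hescape T hTsub v hv hvT
    exact hTsep.2.2 a ha t rfl hreach
  by_contra hne
  exact hTmin S ⟨hST, fun h => hne (Set.Subset.antisymm h hST)⟩ hSsep
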